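/- Let $A = \begin{pmatrix} 1 & 1 \\ 1 & 0 \end{pmatrix}$ (Fibonacci matrix). Suppose $p = (p_{ij})$ and $q = (q_{ij})$ are $2\times 2$ magic unitaries over a unital C*-algebra with $Ap = qA$. Then $p$ and $q$ are both the identity matrix: $p_{11} = p_{22} = q_{11} = q_{22} = 1$ and $p_{12} = p_{21} = q_{12} = q_{21} = 0$. -/
import Mathlib


/-- Let `A = !![1, 1; 1, 0]` be the Fibonacci matrix. Suppose
`p = (p_{ij})` and `q = (q_{ij})` are `2 × 2` magic unitaries over a unital
C*-algebra with `A p = q A`. Then `p` and `q` are both the identity matrix: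
`p₁₁ = p₂₂ = q₁₁ = q₂₂ = 1` and `p₁₂ = p₂₁ = q₁₂ = q₂₁ = 0`. -/
theorem fibonacci_magic_unitaries_trivial {B : Type*} [NormedRing B] [StarRing B]
    [CStarRing B] [CompleteSpace B] [NormedAlgebra ℂ B] [StarModule ℂ B]
    (A : Matrix (Fin 2) (Fin 2) ℕ) (hA : A = !![1, 1; 1, 0])
    (p q : Fin 2 → Fin 2 → B)
    (hp_sa : ∀ i j, star (p i j) = p i j) (hp_idem : ∀ i j, p i j * p i j = p i j)
    (hp_row : ∀ i, ∑ j, p i j = 1) (hp_col : ∀ j, ∑ i, p i j = 1)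
    (hq_sa : ∀ i j, star (q i j) = q i j) (hq_idem : ∀ i j, q i j * q i j = q i j)
    (hq_row : ∀ i, ∑ j, q i j = 1) (hq_col : ∀ j, ∑ i, q i j = 1)
    (hint : ∀ i j, ∑ l, A i l • p l j = ∑ l, A l j • q i l) :
    p 0 0 = 1 ∧ p 1 1 = 1 ∧ p 0 1 = 0 ∧ p 1 0 = 0 ∧
      q 0 0 = 1 ∧ q 1 1 = 1 ∧ q 0 1 = 0 ∧ q 1 0 = 0 := by
  subst hA
  have h01 := hint 0 1
  have h10 := hint 1 0
  simp [Fin.sum_univ_two, Matrix.cons_val_zero, Matrix.cons_val_one, Matrix.head_cons] at h01 h10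
  have hpc1 := hp_col 1
  have hqr1 := hq_row 1
  simp [Fin.sum_univ_two] at hpc1 hqr1
  have hq00 : q 0 0 = 1 := by rw [← h01, hpc1]
  have hp00 : p 0 0 = 1 := by rw [h10, hqr1]
  have hpr0 := hp_row 0; have hpc0 := hp_col 0; have hpr1 := hp_row 1
  have hqr0 := hq_row 0; have hqc0 := hq_col 0; have hqr1' := hq_row 1
  simp [Fin.sum_univ_two] at hpr0 hpc0 hpr1 hqr0 hqc0 hqr1'
  have hp01 : p 0 1 = 0 := by rwa [hp00, add_eq_left] at hpr0
  have hp10 : p 1 0 = 0 := by rwa [hp00, add_eq_left] at hpc0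
  have hp11 : p 1 1 = 1 := by rwa [hp10, zero_add] at hpr1
  have hq01 : q 0 1 = 0 := by rwa [hq00, add_eq_left] at hqr0
  have hq10 : q 1 0 = 0 := by rwa [hq00, add_eq_left] at hqc0
  have hq11 : q 1 1 = 1 := by rwa [hq10, zero_add] at hqr1'
  exact ⟨hp00, hp11, hp01, hp10, hq00, hq11, hq01, hq10⟩
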